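/- Let A_1,…,A_n be arbitrary real n×n matrices, and define B_1 = C_1 = E_{11} and B_i = C_i = E_{1i} − E_{i1} for i = 2,…,n. Consider the system S: v^T A_i w = 0 (i = 1,…,n), u^T B_j w = 0 (j = 1,…,n), u^T C_k v = 0 (k = 1,…,n). If (u, v, w) ∈ ℝ^n × ℝ^n × ℝ^n is a solution of S with u ≠ 0, v ≠ 0 and w ≠ 0, then u_1 = 0, v_1 = 0, and moreover w_1 = 0. -/

import Mathlib

open Matrix

lemma dot_std {n : ℕ} (u w : Fin n → ℝ) (i j : Fin n) :
    u ⬝ᵥ (Matrix.single i j 1).mulVec w = u i * w j := by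
  simp [Matrix.mulVec, dotProduct, Matrix.single, Finset.mul_sum,
    Finset.sum_ite_eq, ite_and, mul_comm]

/-- Claim 1: any solution of the system `S` (with
`B_1 = C_1 = E_{11}` and `B_i = C_i = E_{1i} − E_{i1}` for `i ≥ 2`) with
`u, v, w` all nonzero has `u_1 = v_1 = w_1 = 0`. -/
theorem stmt_10 (n : ℕ) [NeZero n] (A : Fin n → Matrix (Fin n) (Fin n) ℝ)
    (B C : Fin n → Matrix (Fin n) (Fin n) ℝ)
    (hB0 : B 0 = Matrix.single 0 0 1)
    (hBi : ∀ i : Fin n, i ≠ 0 →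
      B i = Matrix.single 0 i 1 - Matrix.single i 0 1)
    (hC0 : C 0 = Matrix.single 0 0 1)
    (hCi : ∀ i : Fin n, i ≠ 0 →
      C i = Matrix.single 0 i 1 - Matrix.single i 0 1)
    (u v w : Fin n → ℝ) (hu : u ≠ 0) (hv : v ≠ 0) (hw : w ≠ 0)
    (h1 : ∀ i, v ⬝ᵥ (A i).mulVec w = 0)
    (h2 : ∀ j, u ⬝ᵥ (B j).mulVec w = 0)
    (h3 : ∀ k, u ⬝ᵥ (C k).mulVec v = 0) :
    u 0 = 0 ∧ v 0 = 0 ∧ w 0 = 0 := by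
  have hb0 : u 0 * w 0 = 0 := by
    have := h2 0; rw [hB0, dot_std] at this; exact this
  have hbi : ∀ i : Fin n, i ≠ 0 → u 0 * w i - u i * w 0 = 0 := by
    intro i hi
    have := h2 i
    rw [hBi i hi, Matrix.sub_mulVec, dotProduct_sub, dot_std, dot_std] at this
    exact this
  have hci : ∀ i : Fin n, i ≠ 0 → u 0 * v i - u i * v 0 = 0 := by
    intro i hi
    have := h3 i
    rw [hCi i hi, Matrix.sub_mulVec, dotProduct_sub, dot_std, dot_std] at this
    exact this
  have hu0 : u 0 = 0 := by
    by_contra h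
    have hw0 : w 0 = 0 := by
      rcases mul_eq_zero.mp hb0 with h' | h'
      · exact absurd h' h
      · exact h'
    apply hw
    funext i
    rcases eq_or_ne i 0 with rfl | hi
    · exact hw0
    · have := hbi i hi
      rw [hw0, mul_zero, sub_zero] at this
      exact (mul_eq_zero.mp this).resolve_left h
  have hw0 : w 0 = 0 := by
    by_contra h
    apply hu
    funext i
    rcases eq_or_ne i 0 with rfl | hi
    · exact hu0
    · have := hbi i hi
      rw [hu0, zero_mul, zero_sub, neg_eq_zero] at this
      exact (mul_eq_zero.mp this).resolve_right h
  have hv0 : v 0 = 0 := by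
    by_contra h
    apply hu
    funext i
    rcases eq_or_ne i 0 with rfl | hi
    · exact hu0
    · have := hci i hi
      rw [hu0, zero_mul, zero_sub, neg_eq_zero] at this
      exact (mul_eq_zero.mp this).resolve_right h
  exact ⟨hu0, hv0, hw0⟩
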